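/- Let K be an algebraically closed field with a Krull valuation val : K → Γ ∪ {∞}, and let f_1, …, f_k be finitely many Laurent polynomials in N variables with coefficients in the valuation ring A_val = {a ∈ K : val(a) ≥ 0}. If each f_i has at least one coefficient that is a unit of A_val (i.e. of value 0), then there exists an N-tuple u = (u_1,…,u_N) with val(u_j) = 0 for all j such that f_i(u) is a unit of A_val (i.e. val(f_i(u)) = 0) for every i ∈ {1,…,k}. -/

import Mathlib

set_option linter.unusedSectionVars false
set_option maxHeartbeats 1000000


open Finset Pointwise

/-- The tropical dot product `α·γ = ∑ i, α i • γ i`. -/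
noncomputable def tropDot {Γ : Type*} [AddCommGroup Γ] [LinearOrder Γ] [IsOrderedAddMonoid Γ] {N : ℕ}
    (α : Fin N → ℤ) (γ : Fin N → Γ) : Γ :=
  ∑ i, α i • γ i

/-- The tropicalization of a Laurent polynomial `f` (an element of the group algebra
`K[ℤ^N]`), evaluated at `γ ∈ Γ^N`:  `Tf(γ) = min_{α ∈ E(f)} (val φ_α + α·γ)`,
computed in `Γ ∪ {∞}` (the min over the empty set is `∞`). -/
noncomputable def tropicalize {Γ : Type*} [AddCommGroup Γ] [LinearOrder Γ] [IsOrderedAddMonoid Γ]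
    {K : Type*} [Field K] {N : ℕ} (val : K → WithTop Γ)
    (f : AddMonoidAlgebra K (Fin N → ℤ)) (γ : Fin N → Γ) : WithTop Γ :=
  f.coeff.support.inf fun α => val (f.coeff α) + WithTop.some (tropDot α γ)

/-- `D_γ(Tf)`: the set of exponents of `f` at which the minimum defining `Tf(γ)`
is attained. -/
def tropD {Γ : Type*} [AddCommGroup Γ] [LinearOrder Γ] [IsOrderedAddMonoid Γ] {K : Type*} [Field K] {N : ℕ}
    (val : K → WithTop Γ) (f : AddMonoidAlgebra K (Fin N → ℤ))
    (γ : Fin N → Γ) : Set (Fin N → ℤ) :=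
  {α | α ∈ f.coeff.support ∧ tropicalize val f γ = val (f.coeff α) + WithTop.some (tropDot α γ)}

/-- `V(Tf)`: the hypersurface associated to the tropicalization of `f`,
i.e. the points `γ` where the minimum is attained at least twice. -/
def tropV {Γ : Type*} [AddCommGroup Γ] [LinearOrder Γ] [IsOrderedAddMonoid Γ] {K : Type*} [Field K] {N : ℕ}
    (val : K → WithTop Γ) (f : AddMonoidAlgebra K (Fin N → ℤ)) :
    Set (Fin N → Γ) :=
  {γ | ∃ α β : Fin N → ℤ, α ≠ β ∧ α ∈ tropD val f γ ∧ β ∈ tropD val f γ}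

/-- Evaluation of a Laurent polynomial at a point of the torus `(K∖{0})^N`:
`f(x) = ∑_{α ∈ E(f)} φ_α x^α`. -/
noncomputable def lEval {K : Type*} [Field K] {N : ℕ}
    (f : AddMonoidAlgebra K (Fin N → ℤ)) (x : Fin N → Kˣ) : K :=
  ∑ α ∈ f.coeff.support, f.coeff α * ((∏ i, (x i) ^ (α i) : Kˣ) : K)



section ValAux

variable {Γ : Type*} [AddCommGroup Γ] [LinearOrder Γ] [IsOrderedAddMonoid Γ] {K : Type*} [Field K]
variable (val : K → WithTop Γ)
variable (hval0 : ∀ x : K, val x = ⊤ ↔ x = 0)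
variable (hvalmul : ∀ x y : K, val (x * y) = val x + val y)
variable (hvaladd : ∀ x y : K, min (val x) (val y) ≤ val (x + y))

include hval0 hvalmul in
theorem myval_one : val 1 = 0 := by
  have h := hvalmul 1 1
  rw [mul_one] at h
  have h1 : val 1 ≠ ⊤ := by simp [hval0]
  obtain ⟨g, hg⟩ := WithTop.ne_top_iff_exists.mp h1
  rw [← hg, ← WithTop.coe_add] at h
  have hg0 : g = 0 := by
    have := (WithTop.coe_inj.mp h).symm
    rcases lt_trichotomy g 0 with h' | h' | h'
    · exact absurd this (by simpa using ((add_lt_add_left h' g)).ne)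
    · exact h'
    · exact absurd this (by simpa using ((add_lt_add_left h' g)).ne')
  rw [← hg, hg0]; rfl

include hval0 hvalmul in
theorem myval_neg (x : K) : val (-x) = val x := by
  have hm1 : val (-1 : K) = 0 := by
    have h := hvalmul (-1) (-1)
    rw [neg_mul_neg, one_mul, myval_one val hval0 hvalmul] at h
    have h1 : val (-1 : K) ≠ ⊤ := by simp [hval0]
    obtain ⟨g, hg⟩ := WithTop.ne_top_iff_exists.mp h1
    rw [← hg, ← WithTop.coe_add] at h
    have hgg : g + g = 0 := by exact_mod_cast h.symm
    have hg0 : g = 0 := by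
      rcases lt_trichotomy g 0 with h' | h' | h'
      · exact absurd hgg (by simpa using (add_lt_add h' h').ne)
      · exact h'
      · exact absurd hgg (by simpa using (add_lt_add h' h').ne')
    rw [← hg, hg0]; rfl
  calc val (-x) = val ((-1) * x) := by rw [neg_one_mul]
  _ = val (-1) + val x := hvalmul _ _
  _ = val x := by rw [hm1, zero_add]

include hvaladd in
theorem myval_sum_nonneg {ι : Type*} (s : Finset ι) (g : ι → K)
    (h : ∀ i ∈ s, 0 ≤ val (g i)) (h0 : 0 ≤ val (0:K)) :
    0 ≤ val (∑ i ∈ s, g i) := by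
  classical
  induction s using Finset.induction_on with
  | empty => simpa using h0
  | @insert a s' hx ih =>
    rw [Finset.sum_insert hx]
    refine le_trans ?_ (hvaladd _ _)
    rw [le_min_iff]
    exact ⟨h a (Finset.mem_insert_self a s'), ih fun i hi => h i (Finset.mem_insert_of_mem hi)⟩

include hval0 hvalmul hvaladd in
theorem myval_add_eq_of_lt {a b : K} (h : val a < val b) : val (a + b) = val a := by
  have hge : val a ≤ val (a + b) := by
    have := hvaladd a b
    rwa [min_eq_left h.le] at this
  refine le_antisymm ?_ hge
  have key : val ((a+b) + (-b)) = val a := congrArg val (by ring)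
  have hmin : min (val (a+b)) (val (-b)) ≤ val a := key ▸ hvaladd (a+b) (-b)
  rw [myval_neg val hval0 hvalmul] at hmin
  by_contra hc
  push_neg at hc
  exact absurd hmin (not_le.mpr (lt_min hc h))

include hval0 hvalmul in
theorem myval_inv {x : K} (hx : x ≠ 0) (h0 : val x = 0) : val x⁻¹ = 0 := by
  have h := hvalmul x x⁻¹
  rw [mul_inv_cancel₀ hx, myval_one val hval0 hvalmul, h0, zero_add] at h
  exact h.symm

include hval0 hvalmul in
theorem myval_pow {x : K} (h0 : val x = 0) (m : ℕ) : val (x ^ m) = 0 := by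
  induction m with
  | zero => simpa using myval_one val hval0 hvalmul
  | succ n ih => rw [pow_succ, hvalmul, ih, h0, add_zero]

include hval0 hvalmul in
theorem myval_zpow {x : K} (hx : x ≠ 0) (h0 : val x = 0) (n : ℤ) : val (x ^ n) = 0 := by
  cases n with
  | ofNat m => simpa using myval_pow val hval0 hvalmul h0 m
  | negSucc m =>
    rw [zpow_negSucc]
    exact myval_inv val hval0 hvalmul (pow_ne_zero _ hx)
      (myval_pow val hval0 hvalmul h0 (m+1))

theorem wt_add_eq_zero {a b : WithTop Γ} (ha : 0 ≤ a) (hb : 0 ≤ b) (hab : a + b = 0) :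
    a = 0 ∧ b = 0 := by
  constructor
  · refine le_antisymm ?_ ha
    calc a = a + 0 := (add_zero a).symm
    _ ≤ a + b := add_le_add_right hb a
    _ = 0 := hab
  · refine le_antisymm ?_ hb
    calc b = 0 + b := (zero_add b).symm
    _ ≤ a + b := add_le_add_left ha b
    _ = 0 := hab

include hval0 hvalmul in
theorem myval_nsmul {x : K} {g : Γ} (hg : val x = WithTop.some g) (m : ℕ) :
    val (x ^ m) = WithTop.some (m • g) := by
  induction m with
  | zero => simpa using myval_one val hval0 hvalmul
  | succ n ih =>
    rw [pow_succ, hvalmul, ih, hg, succ_nsmul, WithTop.coe_add]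

def valSubring : Subring K where
  carrier := {x | 0 ≤ val x}
  mul_mem' {a b} ha hb := by
    show 0 ≤ val (a * b)
    rw [hvalmul]
    exact add_nonneg ha hb
  one_mem' := by
    show 0 ≤ val (1:K)
    rw [myval_one val hval0 hvalmul]
  add_mem' {a b} ha hb := by
    show 0 ≤ val (a + b)
    exact le_trans (le_min ha hb) (hvaladd a b)
  zero_mem' := by
    show 0 ≤ val (0:K)
    rw [(hval0 0).mpr rfl]
    exact le_top
  neg_mem' {a} ha := by
    show 0 ≤ val (-a)
    rwa [myval_neg val hval0 hvalmul a]

theorem mem_valSubring {x : K} : x ∈ valSubring val hval0 hvalmul hvaladd ↔ 0 ≤ val x :=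
  Iff.rfl

theorem coe_valSubring_nonneg (a : valSubring val hval0 hvalmul hvaladd) :
    0 ≤ val (a : K) := a.2

theorem isUnit_valSubring (a : valSubring val hval0 hvalmul hvaladd) :
    IsUnit a ↔ val (a : K) = 0 := by
  constructor
  · rintro ⟨u, hu⟩
    have h1 : ((u * u⁻¹ : _) : K) = 1 := by rw [mul_inv_cancel]; rfl
    have h2 : val ((u : valSubring val hval0 hvalmul hvaladd) : K)
        + val (((u⁻¹ : _) : valSubring val hval0 hvalmul hvaladd) : K) = 0 := by
      rw [← hvalmul, ← Subring.coe_mul] at *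
      rw [show (((u : _) * ((u⁻¹ : _)) : valSubring val hval0 hvalmul hvaladd) : K) = 1 from h1]
      exact myval_one val hval0 hvalmul
    have := wt_add_eq_zero
      (coe_valSubring_nonneg val hval0 hvalmul hvaladd _)
      (coe_valSubring_nonneg val hval0 hvalmul hvaladd _) h2
    rw [← hu]
    exact this.1
  · intro h0
    have hane : (a : K) ≠ 0 := by
      intro h
      rw [h, (hval0 0).mpr rfl] at h0
      exact (by simp : (0: WithTop Γ) ≠ ⊤) h0.symm
    have hinv : val ((a:K)⁻¹) = 0 := myval_inv val hval0 hvalmul hane h0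
    refine IsUnit.of_mul_eq_one (a := a) ⟨(a:K)⁻¹, le_of_eq hinv.symm⟩ ?_
    ext
    exact mul_inv_cancel₀ hane

theorem isLocalRing_valSubring : IsLocalRing (valSubring val hval0 hvalmul hvaladd) := by
  haveI : Nontrivial (valSubring val hval0 hvalmul hvaladd) :=
    nontrivial_of_ne 0 1 (fun h => by
      have := congrArg (fun x : valSubring val hval0 hvalmul hvaladd => (x : K)) h
      simpa using this)
  apply IsLocalRing.of_nonunits_add
  intro a b ha hb
  intro hu
  have hva : 0 < val (a : K) := by
    rcases lt_or_eq_of_le (coe_valSubring_nonneg val hval0 hvalmul hvaladd a) with h | h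
    · exact h
    · exact absurd ((isUnit_valSubring val hval0 hvalmul hvaladd a).mpr h.symm) ha
  have hvb : 0 < val (b : K) := by
    rcases lt_or_eq_of_le (coe_valSubring_nonneg val hval0 hvalmul hvaladd b) with h | h
    · exact h
    · exact absurd ((isUnit_valSubring val hval0 hvalmul hvaladd b).mpr h.symm) hb
  have hlt : 0 < val ((a : K) + (b : K)) := lt_of_lt_of_le (lt_min hva hvb) (hvaladd _ _)
  have := (isUnit_valSubring val hval0 hvalmul hvaladd (a + b)).mp hu
  rw [Subring.coe_add] at this
  exact hlt.ne' this

include hval0 hvalmul hvaladd in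
theorem val_eq_zero_of_sq {x : K} (hx : x * x = x + 1) : x ≠ 0 ∧ val x = 0 := by
  have hone : val (1:K) = 0 := myval_one val hval0 hvalmul
  have hx0 : x ≠ 0 := by
    intro h; rw [h] at hx; simp at hx
  refine ⟨hx0, ?_⟩
  have hxt : val x ≠ ⊤ := fun h => hx0 ((hval0 x).mp h)
  rcases lt_trichotomy (val x) 0 with h | h | h
  · exfalso
    have h1 : val (x + 1) = val x :=
      myval_add_eq_of_lt val hval0 hvalmul hvaladd (a := x) (b := 1) (by rw [hone]; exact h)
    have h2 : val (x * x) = val x + val x := hvalmul x x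
    rw [hx, h1] at h2
    obtain ⟨g, hg⟩ := WithTop.ne_top_iff_exists.mp hxt
    rw [← hg, ← WithTop.coe_add, WithTop.coe_inj] at h2
    have hg0 : g = 0 := left_eq_add.mp h2
    rw [← hg, hg0] at h
    exact lt_irrefl (0 : Γ) (by exact_mod_cast h)
  · exact h
  · exfalso
    have h1 : val (1 + x) = val 1 :=
      myval_add_eq_of_lt val hval0 hvalmul hvaladd (by rw [hone]; exact h)
    rw [add_comm] at h1
    have h2 : val (x * x) = val x + val x := hvalmul x x
    rw [hx, h1, hone] at h2
    have hc : (0 : WithTop Γ) < val x + val x :=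
      lt_of_lt_of_le h (le_add_of_nonneg_right h.le)
    rw [← h2] at hc
    exact lt_irrefl _ hc

include hval0 hvalmul hvaladd in
theorem infinite_residueField [IsAlgClosed K] :
    haveI := isLocalRing_valSubring val hval0 hvalmul hvaladd
    Infinite (IsLocalRing.ResidueField (valSubring val hval0 hvalmul hvaladd)) := by
  haveI := isLocalRing_valSubring val hval0 hvalmul hvaladd
  set A := valSubring val hval0 hvalmul hvaladd with hA
  set κ := IsLocalRing.ResidueField A with hκ
  set res := IsLocalRing.residue A with hres
  by_contra hinf
  rw [not_infinite_iff_finite] at hinf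
  haveI : Finite κ := hinf
  haveI : Finite κˣ := inferInstance
  set m := Nat.card κˣ with hm
  have hm0 : 0 < m := Nat.card_pos
  have res1 : ∀ c : A, val (c : K) = 0 → res c = 1 := by
    intro c hc
    obtain ⟨y, hy⟩ := IsAlgClosed.exists_pow_nat_eq (c : K) hm0
    have hyne : y ≠ 0 := by
      intro h
      rw [h, zero_pow hm0.ne'] at hy
      have hh : val (c:K) = ⊤ := by rw [← hy]; exact (hval0 0).mpr rfl
      rw [hc] at hh
      simp at hh
    have hyt : val y ≠ ⊤ := fun h => hyne ((hval0 y).mp h)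
    obtain ⟨g, hg⟩ := WithTop.ne_top_iff_exists.mp hyt
    have hpow := myval_nsmul val hval0 hvalmul (x := y) (g := g) hg.symm m
    rw [hy, hc] at hpow
    have hg0 : g = 0 := by
      have hsm : m • g = 0 := by exact_mod_cast hpow.symm
      rcases lt_trichotomy g 0 with h' | h' | h'
      · have hneg : 0 < m • (-g) := nsmul_pos (neg_pos.mpr h') hm0.ne'
        rw [smul_neg, neg_pos] at hneg
        exact absurd hsm hneg.ne
      · exact h'
      · exact absurd hsm (nsmul_pos h' hm0.ne').ne'
    have hy0 : val y = 0 := by rw [← hg, hg0]; rfl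
    set yA : A := ⟨y, by rw [mem_valSubring val hval0 hvalmul hvaladd, hy0]⟩ with hyA
    have hyc : yA ^ m = c := by
      ext
      push_cast
      exact hy
    have hyu : IsUnit yA := (isUnit_valSubring val hval0 hvalmul hvaladd yA).mpr hy0
    obtain ⟨w, hw⟩ := (hyu.map res)
    have hwm : w ^ m = 1 := pow_card_eq_one'
    calc res c = res (yA ^ m) := by rw [hyc]
    _ = (res yA) ^ m := map_pow _ _ _
    _ = ((w : κ)) ^ m := by rw [hw]
    _ = ((w ^ m : κˣ) : κ) := by push_cast; rfl
    _ = 1 := by rw [hwm]; rfl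
  obtain ⟨x, hxroot⟩ : ∃ x : K, x * x = x + 1 := by
    have h2 : (Polynomial.X ^ 2 - Polynomial.X - 1 : Polynomial K).degree = 2 := by
      compute_degree!
    obtain ⟨x, hx⟩ := IsAlgClosed.exists_root (Polynomial.X ^ 2 - Polynomial.X - 1 : Polynomial K)
      (by rw [h2]; simp)
    refine ⟨x, ?_⟩
    have heval := hx
    simp [Polynomial.IsRoot] at heval
    linear_combination heval
  obtain ⟨hx0, hxval⟩ := val_eq_zero_of_sq val hval0 hvalmul hvaladd hxroot
  set xA : A := ⟨x, by rw [mem_valSubring val hval0 hvalmul hvaladd, hxval]⟩ with hxA'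
  have hxA : xA * xA = xA + 1 := by
    ext; push_cast; exact hxroot
  have h1 : res xA = 1 := res1 xA hxval
  have hone2 : (1 : κ) = 1 + 1 := by
    calc (1:κ) = res xA * res xA := by rw [h1, one_mul]
    _ = res (xA * xA) := (map_mul _ _ _).symm
    _ = res (xA + 1) := by rw [hxA]
    _ = res xA + 1 := by rw [map_add, map_one]
    _ = 1 + 1 := by rw [h1]
  have h01 : (0:κ) = 1 := add_left_cancel (a := (1:κ)) (by rw [add_zero]; exact hone2)
  exact one_ne_zero h01.symm

end ValAux

section Torus
variable {κ : Type*} [Field κ] [Infinite κ] {N : ℕ}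

theorem exists_unit_zpow_ne_one (m : ℤ) (hm : m ≠ 0) : ∃ t : κˣ, t ^ m ≠ 1 := by
  haveI : Infinite ({0}ᶜ : Set κ) :=
    Set.infinite_coe_iff.mpr ((Set.finite_singleton (0:κ)).infinite_compl)
  haveI : Infinite κˣ :=
    Infinite.of_injective (fun x : ({0}ᶜ : Set κ) => Units.mk0 x.1 (fun hx => x.2 (by simp [hx])))
      (fun a b hab => Subtype.ext (by simpa using congrArg Units.val hab))
  by_contra h
  push_neg at h
  have h' : ∀ t : κˣ, t ^ m.natAbs = 1 := by
    intro t
    have ht := h t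
    rcases Int.natAbs_eq m with he | he
    · rw [he, zpow_natCast] at ht; exact ht
    · rw [he, zpow_neg, zpow_natCast, inv_eq_one] at ht; exact ht
  have hmn : 0 < m.natAbs := Int.natAbs_pos.mpr hm
  haveI : NeZero m.natAbs := ⟨hmn.ne'⟩
  have hinj : Function.Injective
      (fun t : κˣ => (⟨t, (mem_rootsOfUnity _ _).mpr (h' t)⟩ : rootsOfUnity m.natAbs κ)) :=
    fun a b hab => by simpa [Subtype.ext_iff] using hab
  exact (Finite.of_injective _ hinj).not_infinite inferInstance

/-- The character `w ↦ w^α` on the torus. -/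
noncomputable def torusChar (α : Fin N → ℤ) : (Fin N → κˣ) →* κ where
  toFun w := ∏ i, ((w i : κ) ^ (α i))
  map_one' := by simp
  map_mul' w v := by
    simp only [Pi.mul_apply, Units.val_mul, mul_zpow]
    rw [Finset.prod_mul_distrib]

theorem torusChar_injective : Function.Injective (torusChar (κ := κ) (N := N)) := by
  intro α β hαβ
  by_contra hne
  obtain ⟨i0, hi0⟩ : ∃ i0, α i0 ≠ β i0 := Function.ne_iff.mp hne
  obtain ⟨t, ht⟩ := exists_unit_zpow_ne_one (κ := κ) (α i0 - β i0) (sub_ne_zero.mpr hi0)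
  have h := congrFun (congrArg (fun φ : (Fin N → κˣ) →* κ => (φ : (Fin N → κˣ) → κ)) hαβ)
    (Function.update (1 : Fin N → κˣ) i0 t)
  simp only [torusChar, MonoidHom.coe_mk, OneHom.coe_mk] at h
  have heval : ∀ γ : Fin N → ℤ,
      (∏ i, (((Function.update (1 : Fin N → κˣ) i0 t) i : κ) ^ (γ i))) = (t : κ) ^ (γ i0) := by
    intro γ
    rw [Finset.prod_eq_single i0]
    · simp
    · intro b _ hb
      simp [Function.update_of_ne hb]
    · simp
  rw [heval α, heval β] at h
  have hu : t ^ (α i0) = t ^ (β i0) := by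
    ext
    simpa [Units.val_zpow_eq_zpow_val] using h
  have : t ^ (α i0 - β i0) = 1 := by
    rw [zpow_sub, hu, mul_inv_cancel]
  exact ht this

theorem exists_torus_point_ne_zero (F : AddMonoidAlgebra κ (Fin N → ℤ)) (hF : F ≠ 0) :
    ∃ w : Fin N → κˣ, (∑ α ∈ F.coeff.support, F.coeff α * torusChar α w) ≠ 0 := by
  by_contra h
  push_neg at h
  have hli : LinearIndependent κ (fun α : Fin N → ℤ => ((torusChar α : (Fin N → κˣ) →* κ) : (Fin N → κˣ) → κ)) := by
    refine (linearIndependent_monoidHom (Fin N → κˣ) κ).comp _ ?_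
    exact torusChar_injective
  have hzero : ∑ α ∈ F.coeff.support, F.coeff α • ((torusChar α : (Fin N → κˣ) →* κ) : (Fin N → κˣ) → κ) = 0 := by
    funext w
    rw [Finset.sum_apply]
    simpa [smul_eq_mul] using h w
  obtain ⟨α, hα⟩ := Finsupp.support_nonempty_iff.mpr (AddMonoidAlgebra.coeff_eq_zero.not.mpr hF)
  exact (Finsupp.mem_support_iff.mp hα) (linearIndependent_iff'.mp hli F.coeff.support F.coeff hzero α hα)

noncomputable def expChar (w : Fin N → κˣ) : Multiplicative (Fin N → ℤ) →* κ where
  toFun α := ∏ i, (w i : κ) ^ ((Multiplicative.toAdd α) i)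
  map_one' := by simp
  map_mul' α β := by
    simp only [toAdd_mul, Pi.add_apply]
    rw [← Finset.prod_mul_distrib]
    exact Finset.prod_congr rfl fun i _ => zpow_add₀ (Units.ne_zero (w i)) _ _

noncomputable def evalHom (w : Fin N → κˣ) : AddMonoidAlgebra κ (Fin N → ℤ) →ₐ[κ] κ :=
  AddMonoidAlgebra.lift κ κ (Fin N → ℤ) (expChar w)

theorem evalHom_apply (w : Fin N → κˣ) (P : AddMonoidAlgebra κ (Fin N → ℤ)) :
    evalHom w P = ∑ α ∈ P.coeff.support, P.coeff α * torusChar α w := by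
  rw [evalHom, AddMonoidAlgebra.lift_apply, Finsupp.sum]
  exact Finset.sum_congr rfl fun α _ => by simp [expChar, torusChar, smul_eq_mul]


end Torus

/-- If each of finitely many Laurent polynomials with coefficients in the valuation
ring has at least one unit coefficient, then there is an `N`-tuple of units at which
every one of them evaluates to a unit. -/
theorem exists_unit_tuple_eval_unit {Γ : Type*} [AddCommGroup Γ] [LinearOrder Γ] [IsOrderedAddMonoid Γ]
    {K : Type*} [Field K] [IsAlgClosed K] {N k : ℕ}
    (val : K → WithTop Γ)
    (hval0 : ∀ x : K, val x = ⊤ ↔ x = 0)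
    (hvalmul : ∀ x y : K, val (x * y) = val x + val y)
    (hvaladd : ∀ x y : K, min (val x) (val y) ≤ val (x + y))
    (f : Fin k → AddMonoidAlgebra K (Fin N → ℤ))
    (hcoeff : ∀ i α, 0 ≤ val ((f i).coeff α))
    (hunit : ∀ i, ∃ α, val ((f i).coeff α) = 0) :
    ∃ u : Fin N → Kˣ, (∀ j, val (u j : K) = 0) ∧ ∀ i, val (lEval (f i) u) = 0 := by
  classical
  set A := valSubring val hval0 hvalmul hvaladd with hA
  haveI hlr : IsLocalRing A := isLocalRing_valSubring val hval0 hvalmul hvaladd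
  set κ := IsLocalRing.ResidueField A with hκ
  set res := IsLocalRing.residue A with hres
  haveI : Infinite κ := infinite_residueField val hval0 hvalmul hvaladd
  -- residue nonzero iff unit
  have hresunit : ∀ a : A, res a ≠ 0 ↔ IsUnit a := by
    intro a
    have h1 : res a = 0 ↔ ¬ IsUnit a := by
      rw [hres, IsLocalRing.residue]
      exact (Ideal.Quotient.eq_zero_iff_mem).trans
        ((IsLocalRing.mem_maximalIdeal a).trans mem_nonunits_iff)
    rw [Ne, h1, not_not]
  -- the residue map on K
  set rmap : K → κ := fun c => if h : 0 ≤ val c then res ⟨c, h⟩ else 0 with hrmap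
  have hrmap0 : rmap 0 = 0 := by
    have h0 : (0:WithTop Γ) ≤ val 0 := by rw [(hval0 0).mpr rfl]; exact le_top
    show (if h : 0 ≤ val (0:K) then res ⟨0, h⟩ else 0) = 0
    rw [dif_pos h0]
    have h00 : (⟨(0:K), h0⟩ : A) = 0 := Subtype.ext rfl
    rw [h00, map_zero]
  have hrmapv : ∀ (c : K) (h : 0 ≤ val c), rmap c = res ⟨c, h⟩ := by
    intro c h
    show (if hh : 0 ≤ val c then res ⟨c, hh⟩ else 0) = res ⟨c, h⟩
    rw [dif_pos h]
  set F : Fin k → AddMonoidAlgebra κ (Fin N → ℤ) :=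
    fun i => AddMonoidAlgebra.ofCoeff (Finsupp.mapRange rmap hrmap0 (f i).coeff) with hF
  have hFapp : ∀ i α, (F i).coeff α = rmap ((f i).coeff α) := fun i α => Finsupp.mapRange_apply (hf := hrmap0)
  have hFne : ∀ i, F i ≠ 0 := by
    intro i h0
    obtain ⟨α, hα⟩ := hunit i
    have h1 : (F i).coeff α = res ⟨(f i).coeff α, hcoeff i α⟩ := by rw [hFapp, hrmapv _ (hcoeff i α)]
    have h2 : IsUnit (⟨(f i).coeff α, hcoeff i α⟩ : A) :=
      (isUnit_valSubring val hval0 hvalmul hvaladd _).mpr hα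
    have h3 : (F i).coeff α ≠ 0 := h1 ▸ (hresunit _).mpr h2
    rw [h0] at h3
    exact h3 rfl
  have hGne : (∏ i : Fin k, F i) ≠ 0 := Finset.prod_ne_zero_iff.mpr fun i _ => hFne i
  obtain ⟨w, hw⟩ := exists_torus_point_ne_zero _ hGne
  rw [← evalHom_apply] at hw
  have hwi : ∀ i, evalHom w (F i) ≠ 0 := by
    intro i h0
    exact hw (by rw [map_prod]; exact Finset.prod_eq_zero (Finset.mem_univ i) h0)
  -- lift w to units of K
  have hsurj : Function.Surjective res := Ideal.Quotient.mk_surjective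
  choose a ha using fun j => hsurj (w j : κ)
  have haunit : ∀ j, IsUnit (a j) := fun j =>
    (hresunit (a j)).mp (by rw [ha j]; exact Units.ne_zero (w j))
  have haval : ∀ j, val ((a j : K)) = 0 := fun j =>
    (isUnit_valSubring val hval0 hvalmul hvaladd (a j)).mp (haunit j)
  have hane : ∀ j, (a j : K) ≠ 0 := by
    intro j hj
    have := haval j
    rw [hj, (hval0 0).mpr rfl] at this
    exact (by simp : (⊤ : WithTop Γ) ≠ 0) this
  set u : Fin N → Kˣ := fun j => Units.mk0 (a j : K) (hane j) with hu
  refine ⟨u, fun j => haval j, fun i => ?_⟩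
  -- unit-level bookkeeping
  set uu : Fin N → Aˣ := fun j => (haunit j).unit with huu
  set b : (Fin N → ℤ) → Aˣ := fun α => ∏ j, (uu j) ^ (α j) with hb
  have hsub : ∀ j, Units.map (A.subtype) (uu j) = u j := by
    intro j
    ext
    simp [huu, hu]
  have hbK : ∀ α : Fin N → ℤ, ((b α : A) : K) = ((∏ j, (u j) ^ (α j) : Kˣ) : K) := by
    intro α
    have h1 : Units.map (A.subtype) (b α) = ∏ j, (u j) ^ (α j) := by
      rw [hb, map_prod]
      exact Finset.prod_congr rfl fun j _ => by rw [map_zpow, hsub j]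
    calc ((b α : A) : K) = ((Units.map (A.subtype) (b α) : Kˣ) : K) := rfl
    _ = ((∏ j, (u j) ^ (α j) : Kˣ) : K) := by rw [h1]
  -- residue of b α
  have hwmap : ∀ j, Units.map (res : A →+* κ) (uu j) = w j := by
    intro j
    ext
    simp [huu, ha j]
  have hresb : ∀ α : Fin N → ℤ, res (b α : A) = torusChar α w := by
    intro α
    have h1 : Units.map (res : A →+* κ) (b α) = ∏ j, (w j) ^ (α j) := by
      rw [hb, map_prod]
      exact Finset.prod_congr rfl fun j _ => by rw [map_zpow, hwmap j]
    calc res (b α : A) = ((Units.map (res : A →+* κ) (b α) : κˣ) : κ) := rfl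
    _ = ((∏ j, (w j) ^ (α j) : κˣ) : κ) := by rw [h1]
    _ = ∏ j, (((w j) ^ (α j) : κˣ) : κ) := map_prod (Units.coeHom κ) _ _
    _ = ∏ j, ((w j : κ)) ^ (α j) :=
        Finset.prod_congr rfl fun j _ => Units.val_zpow_eq_zpow_val _ _
    _ = torusChar α w := rfl
  -- assemble the sum in A
  set T : (Fin N → ℤ) → A := fun α => ⟨(f i).coeff α, hcoeff i α⟩ * (b α : A) with hT
  set S : A := ∑ α ∈ (f i).coeff.support, T α with hS
  have hSval : lEval (f i) u = ((S : A) : K) := by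
    rw [hS, lEval]
    rw [AddSubmonoidClass.coe_finset_sum]
    exact Finset.sum_congr rfl fun α _ => by rw [hT]; push_cast [hbK α]; ring
  have hresS : res S = evalHom w (F i) := by
    rw [hS, map_sum, evalHom_apply]
    rw [Finset.sum_subset (Finsupp.support_mapRange)]
    · exact Finset.sum_congr rfl fun α hα => by
        rw [hT, map_mul, hresb α, hFapp i α, hrmapv _ (hcoeff i α)]
    · intro α _ hα
      rw [Finsupp.notMem_support_iff.mp hα, zero_mul]
  have hSunit : IsUnit S := (hresunit S).mp (by rw [hresS]; exact hwi i)
  rw [hSval]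
  exact (isUnit_valSubring val hval0 hvalmul hvaladd S).mp hSunit
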